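/- Let V be a bounded invertible linear operator on H = ℓ²(ℕ, ℂ). If s ∈ ℝ is such that for all t ∈ ℝ one has U_t ∘ V ∘ U_{−t} = e^{−ist}·V, then s = 0. (In particular, taking V = e^{isT} with T self-adjoint, the Weyl commutation relation between the number operator and any self-adjoint operator fails for every s ≠ 0.) -/

import Mathlib

noncomputable section

open Complex
open scoped ENNReal NNReal

namespace GW

/-- The Hilbert space `H = ℓ²(ℕ, ℂ)`. -/
abbrev H : Type := lp (fun _ : ℕ => ℂ) 2

/-- The domain of the number operator: `{f ∈ H : Σ n² |c_n|² < ∞}`. -/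
def domN : Set H := {f : H | Summable fun n : ℕ => (n : ℝ) ^ 2 * ‖f n‖ ^ 2}

lemma Nop_memℓp {f : H} (hf : f ∈ domN) : Memℓp (fun n : ℕ => (n : ℂ) * f n) 2 := by
  apply memℓp_gen
  refine Summable.congr hf fun n => ?_
  have h2 : ((2 : ℝ≥0∞)).toReal = ((2 : ℕ) : ℝ) := by norm_num
  rw [h2, Real.rpow_natCast]
  simp [norm_mul, mul_pow]

/-- The number operator `N`, defined on its maximal domain `domN`: `(Nf)_n = n·c_n`. -/
def Nop (f : H) (hf : f ∈ domN) : H := ⟨fun n : ℕ => (n : ℂ) * f n, Nop_memℓp hf⟩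

/-- The standard orthonormal basis `(e_n)` of `H`. -/
def eH (n : ℕ) : H := lp.single 2 n (1 : ℂ)

lemma norm_exp_mul (x : ℝ) (c : ℂ) : ‖Complex.exp ((x : ℂ) * Complex.I) * c‖ = ‖c‖ := by
  rw [norm_mul, Complex.norm_exp_ofReal_mul_I, one_mul]

lemma U_memℓp (t : ℝ) (f : H) : Memℓp (fun n : ℕ => Complex.exp (((n * t : ℝ) : ℂ) * Complex.I) * f n) 2 := by
  apply memℓp_gen
  refine Summable.congr ((lp.memℓp f).summable (by norm_num)) fun n => ?_
  rw [norm_exp_mul]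

/-- The unitary group `U_t = e^{itN}`: `(U_t f)_n = e^{int} f_n`, as a linear map. -/
def Ulin (t : ℝ) : H →ₗ[ℂ] H where
  toFun f := ⟨fun n : ℕ => Complex.exp (((n * t : ℝ) : ℂ) * Complex.I) * f n, U_memℓp t f⟩
  map_add' f g := by
    apply Subtype.ext
    funext n
    show Complex.exp _ * (⇑(f + g)) n = _
    rw [lp.coeFn_add]
    show Complex.exp _ * (f n + g n) =
      Complex.exp _ * f n + Complex.exp _ * g n
    ring
  map_smul' c f := by
    apply Subtype.ext
    funext n
    show Complex.exp _ * (⇑(c • f)) n = _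
    rw [lp.coeFn_smul]
    show Complex.exp _ * (c * f n) = c * (Complex.exp _ * f n)
    ring

/-- The unitary group `U_t = e^{itN}`: `(U_t f)_n = e^{int} f_n`. -/
def U (t : ℝ) : H →L[ℂ] H :=
  LinearMap.mkContinuousOfExistsBound (Ulin t)
    ⟨1, fun f => by
      simp only [Ulin, LinearMap.coe_mk, AddHom.coe_mk, one_mul]
      apply le_of_eq
      rw [lp.norm_eq_tsum_rpow (by norm_num : 0 < (2 : ℝ≥0∞).toReal),
        lp.norm_eq_tsum_rpow (by norm_num : 0 < (2 : ℝ≥0∞).toReal) f]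
      congr 1
      refine tsum_congr fun n => ?_
      show ‖Complex.exp (((n * t : ℝ) : ℂ) * Complex.I) * f n‖ ^ (2 : ℝ≥0∞).toReal = _
      rw [norm_exp_mul]⟩

lemma U_apply (t : ℝ) (f : H) (n : ℕ) :
    (U t f) n = Complex.exp (((n * t : ℝ) : ℂ) * Complex.I) * f n := rfl

lemma U_neg_U (t : ℝ) (f : H) : U (-t) (U t f) = f := by
  apply lp.ext
  funext n
  show (U (-t) (U t f)) n = f n
  rw [U_apply, U_apply, ← mul_assoc, ← Complex.exp_add]
  have : (((n : ℝ) * -t : ℝ) : ℂ) * Complex.I + (((n : ℝ) * t : ℝ) : ℂ) * Complex.I = 0 := by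
    push_cast; ring
  rw [this, Complex.exp_zero, one_mul]

lemma exp_all_eq_zero {a : ℝ} (ha : ∀ t : ℝ, Complex.exp (((a * t : ℝ) : ℂ) * Complex.I) = 1) :
    a = 0 := by
  by_contra h
  have := ha (Real.pi / a)
  rw [show ((a * (Real.pi / a) : ℝ) : ℂ) = (Real.pi : ℂ) by
    have ha' : (a : ℂ) ≠ 0 := by exact_mod_cast h
    push_cast
    field_simp] at this
  rw [Complex.exp_pi_mul_I] at this
  norm_num at this

lemma eH_ne_zero : eH 0 ≠ 0 := by
  intro h
  have : (eH 0) 0 = (0 : ℂ) := by rw [h]; rfl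
  rw [eH, lp.single_apply_self] at this
  exact one_ne_zero this

/-- Let `V` be a bounded invertible linear operator on `H = ℓ²(ℕ,ℂ)`. If
`s ∈ ℝ` is such that for all `t ∈ ℝ` one has `U_t ∘ V ∘ U_{−t} = e^{−ist}·V`, then `s = 0`. -/
theorem weyl_relation_fails_invertible (V : H ≃L[ℂ] H) (s : ℝ)
    (h : ∀ t : ℝ,
      (U t) ∘L (V : H →L[ℂ] H) ∘L (U (-t)) =
        Complex.exp (-(Complex.I * (s : ℂ) * (t : ℂ))) • (V : H →L[ℂ] H)) :
    s = 0 := by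
  -- extract pointwise form of hypothesis
  have key : ∀ t : ℝ, ∀ f : H,
      U t (V (U (-t) f)) = Complex.exp (-(Complex.I * (s : ℂ) * (t : ℂ))) • V f := by
    intro t f
    have := DFunLike.congr_fun (h t) f
    simpa using this
  -- relation with t-shifted input: U t (V f) = exp(-ist) • V (U t f)
  have key2 : ∀ t : ℝ, ∀ f : H,
      U t (V f) = Complex.exp (-(Complex.I * (s : ℂ) * (t : ℂ))) • V (U t f) := by
    intro t f
    have := key t (U t f)
    rwa [U_neg_U] at this
  -- first direction: s = -(m) for some m with (V e0) m ≠ 0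
  have hV0 : V (eH 0) ≠ 0 := fun hc => eH_ne_zero (V.injective (by simpa using hc))
  obtain ⟨m, hm⟩ : ∃ m : ℕ, (V (eH 0) : ∀ _ : ℕ, ℂ) m ≠ 0 := by
    by_contra hc
    push_neg at hc
    exact hV0 (lp.ext (funext hc))
  have hUe0 : ∀ t : ℝ, U (-t) (eH 0) = eH 0 := by
    intro t
    apply lp.ext
    funext n
    show (U (-t) (eH 0)) n = (eH 0) n
    rw [U_apply]
    rcases eq_or_ne n 0 with rfl | hn
    · simp
    · rw [eH, lp.single_apply_ne 2 0 _ hn, mul_zero]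
  have h1 : ∀ t : ℝ, Complex.exp ((((m : ℝ) + s) * t : ℝ) * Complex.I) = 1 := by
    intro t
    have := congrArg (fun g : H => (g : ∀ _ : ℕ, ℂ) m) (key t (eH 0))
    simp only [hUe0 t] at this
    have h2 : Complex.exp (((m * t : ℝ) : ℂ) * Complex.I) * (V (eH 0) : ∀ _ : ℕ, ℂ) m
        = Complex.exp (-(Complex.I * (s : ℂ) * (t : ℂ))) * (V (eH 0) : ∀ _ : ℕ, ℂ) m := by
      have h3 : (U t (V (eH 0))) m = Complex.exp (((m * t : ℝ) : ℂ) * Complex.I)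
          * (V (eH 0) : ∀ _ : ℕ, ℂ) m := U_apply t _ m
      rw [← h3]
      rw [this]
      rfl
    have h4 := mul_right_cancel₀ hm h2
    have : Complex.exp (((m * t : ℝ) : ℂ) * Complex.I)
        * Complex.exp (Complex.I * (s : ℂ) * (t : ℂ)) = 1 := by
      rw [h4, ← Complex.exp_add]
      simp
    rw [← Complex.exp_add] at this
    rw [← this]
    congr 1
    push_cast
    ring
  have hms : (m : ℝ) + s = 0 := exp_all_eq_zero h1
  -- second direction, using V⁻¹
  have hV0' : V.symm (eH 0) ≠ 0 := fun hc => eH_ne_zero (V.symm.injective (by simpa using hc))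
  obtain ⟨k, hk⟩ : ∃ k : ℕ, (V.symm (eH 0) : ∀ _ : ℕ, ℂ) k ≠ 0 := by
    by_contra hc
    push_neg at hc
    exact hV0' (lp.ext (funext hc))
  have h5 : ∀ t : ℝ, Complex.exp ((((k : ℝ) - s) * t : ℝ) * Complex.I) = 1 := by
    intro t
    -- key2 with f = V.symm (eH 0): U t (eH 0) = exp(-ist) • V (U t (V.symm e0))
    have hx := key2 t (V.symm (eH 0))
    have hVx : V (V.symm (eH 0)) = eH 0 := V.apply_symm_apply (eH 0)
    rw [hVx] at hx
    have hUe0' : U t (eH 0) = eH 0 := by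
      have := hUe0 (-t); rwa [neg_neg] at this
    rw [hUe0'] at hx
    -- apply V.symm
    have hx2 : V.symm (eH 0)
        = Complex.exp (-(Complex.I * (s : ℂ) * (t : ℂ))) • U t (V.symm (eH 0)) := by
      have := congrArg (fun g : H => V.symm g) hx
      simpa using this
    have hx3 := congrArg (fun g : H => (g : ∀ _ : ℕ, ℂ) k) hx2
    have hx4 : (V.symm (eH 0) : ∀ _ : ℕ, ℂ) k
        = Complex.exp (-(Complex.I * (s : ℂ) * (t : ℂ)))
          * (Complex.exp (((k * t : ℝ) : ℂ) * Complex.I)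
            * (V.symm (eH 0) : ∀ _ : ℕ, ℂ) k) := by
      simp only at hx3
      exact hx3.trans rfl
    rw [← mul_assoc] at hx4
    have hx5 : (1 : ℂ) * (V.symm (eH 0) : ∀ _ : ℕ, ℂ) k
        = (Complex.exp (-(Complex.I * (s : ℂ) * (t : ℂ)))
          * Complex.exp (((k * t : ℝ) : ℂ) * Complex.I))
          * (V.symm (eH 0) : ∀ _ : ℕ, ℂ) k := by rw [one_mul, ← hx4]
    have hx6 := (mul_right_cancel₀ hk hx5).symm
    rw [← Complex.exp_add] at hx6
    rw [← hx6]
    congr 1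
    push_cast
    ring
  have hks : (k : ℝ) - s = 0 := exp_all_eq_zero h5
  have hm0 : (0 : ℝ) ≤ (m : ℝ) := Nat.cast_nonneg m
  have hk0 : (0 : ℝ) ≤ (k : ℝ) := Nat.cast_nonneg k
  linarith


end GW
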